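/- Let ι be a nonempty finite index set, γ > 0, t : ι → ℝ with t i > 0 for all i, and let q : ι → ℝ satisfy q i > 0 for all i and Σ_{i∈ι} q i = 1; write q ⋄ t := Σ_{i∈ι} q i · t i. On the simplex S := { p : ι → ℝ : p i ≥ 0 for all i, Σ_i p i = 1 }, define Z(p) := γ·[ log(q ⋄ t) + ( Σ_{i∈ι} t i · (p i − q i) ) / (q ⋄ t) ] − Σ_{i∈ι} p i · log(p i / q i) (with the convention 0·log 0 = 0). Then Z attains its maximum over S at p* given by p* i := q i · exp( γ · t i / (q ⋄ t) ) / Σ_{j∈ι} q j · exp( γ · t j / (q ⋄ t) ), i.e. Z(p) ≤ Z(p*) for every p ∈ S. -/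

import Mathlib

open Finset

/-- The EIITC objective
`Z(p) = γ·[log(q⋄t) + (∑ t i·(p i − q i))/(q⋄t)] − ∑ p i·log(p i/q i)` attains its
maximum over the simplex at `p* i = q i·exp(γ·t i/(q⋄t)) / ∑_j q j·exp(γ·t j/(q⋄t))`.
(Note `Real.log 0 = 0` in Lean, so the convention `0·log 0 = 0` holds automatically.) -/
theorem EIITC_update_maximizes_objective
    {ι : Type*} [Fintype ι] [Nonempty ι]
    (γ : ℝ) (hγ : 0 < γ) (t : ι → ℝ) (ht : ∀ i, 0 < t i)
    (q : ι → ℝ) (hq : ∀ i, 0 < q i) (hqsum : ∑ i, q i = 1)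
    (Z : (ι → ℝ) → ℝ)
    (hZ : ∀ p, Z p = γ * (Real.log (∑ i, q i * t i)
        + (∑ i, t i * (p i - q i)) / (∑ i, q i * t i))
      - ∑ i, p i * Real.log (p i / q i))
    (pstar : ι → ℝ)
    (hpstar : ∀ i, pstar i = q i * Real.exp (γ * t i / (∑ j, q j * t j)) /
        ∑ j, q j * Real.exp (γ * t j / (∑ j', q j' * t j'))) :
    ∀ p : ι → ℝ, (∀ i, 0 ≤ p i) → ∑ i, p i = 1 → Z p ≤ Z pstar := by
  intro p hp hpsum
  have hD : 0 < ∑ i, q i * t i :=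
    Finset.sum_pos (fun i _ => mul_pos (hq i) (ht i)) Finset.univ_nonempty
  set D := ∑ i, q i * t i with hDdef
  have hW : 0 < ∑ j, q j * Real.exp (γ * t j / D) :=
    Finset.sum_pos (fun j _ => mul_pos (hq j) (Real.exp_pos _)) Finset.univ_nonempty
  set W := ∑ j, q j * Real.exp (γ * t j / D) with hWdef
  -- key Gibbs inequality
  have key : ∀ r : ι → ℝ, (∀ i, 0 ≤ r i) → ∑ i, r i = 1 →
      ∑ i, r i * (γ * t i / D) - ∑ i, r i * Real.log (r i / q i) ≤ Real.log W := by
    intro r hr hrsum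
    have hterm : ∀ i ∈ Finset.univ, r i * (γ * t i / D) - r i * Real.log (r i / q i)
        ≤ q i * Real.exp (γ * t i / D) / W - r i + r i * Real.log W := by
      intro i _
      rcases eq_or_lt_of_le (hr i) with h0 | h0
      · rw [← h0]
        simp
        exact div_nonneg (mul_pos (hq i) (Real.exp_pos _)).le hW.le
      · have hx : 0 < q i * Real.exp (γ * t i / D) / (r i * W) :=
          div_pos (mul_pos (hq i) (Real.exp_pos _)) (mul_pos h0 hW)
        have hlog : Real.log (q i * Real.exp (γ * t i / D) / (r i * W))
            = γ * t i / D - Real.log (r i / q i) - Real.log W := by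
          rw [Real.log_div (mul_pos (hq i) (Real.exp_pos _)).ne' (mul_pos h0 hW).ne',
              Real.log_mul (ne_of_gt (hq i)) (Real.exp_ne_zero _),
              Real.log_mul (ne_of_gt h0) (ne_of_gt hW),
              Real.log_exp, Real.log_div (ne_of_gt h0) (ne_of_gt (hq i))]
          ring
        have h1 := Real.log_le_sub_one_of_pos hx
        have h2 := mul_le_mul_of_nonneg_left h1 h0.le
        have h3 : r i * (q i * Real.exp (γ * t i / D) / (r i * W) - 1)
            = q i * Real.exp (γ * t i / D) / W - r i := by
          field_simp
        rw [hlog, h3] at h2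
        linarith
    have hsum := Finset.sum_le_sum hterm
    have e1 : ∑ i, (r i * (γ * t i / D) - r i * Real.log (r i / q i))
        = ∑ i, r i * (γ * t i / D) - ∑ i, r i * Real.log (r i / q i) :=
      Finset.sum_sub_distrib _ _
    have e2 : ∑ i, (q i * Real.exp (γ * t i / D) / W - r i + r i * Real.log W)
        = (∑ i, q i * Real.exp (γ * t i / D)) / W - (∑ i, r i)
          + (∑ i, r i) * Real.log W := by
      rw [Finset.sum_add_distrib, Finset.sum_sub_distrib, ← Finset.sum_div,
          ← Finset.sum_mul]
    rw [e1, e2, hrsum, ← hWdef, div_self (ne_of_gt hW)] at hsum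
    linarith
  -- pstar facts
  have hps : ∀ i, pstar i = q i * Real.exp (γ * t i / D) / W := hpstar
  have hps_pos : ∀ i, 0 < pstar i := by
    intro i
    rw [hps i]
    exact div_pos (mul_pos (hq i) (Real.exp_pos _)) hW
  have hps_sum : ∑ i, pstar i = 1 := by
    simp only [hps]
    rw [← Finset.sum_div, ← hWdef, div_self (ne_of_gt hW)]
  have hps_log : ∀ i, Real.log (pstar i / q i) = γ * t i / D - Real.log W := by
    intro i
    have : pstar i / q i = Real.exp (γ * t i / D) / W := by
      rw [hps i, div_div, mul_comm W (q i), ← div_div,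
          mul_div_cancel_left₀ _ (hq i).ne']
    rw [this, Real.log_div (Real.exp_ne_zero _) (ne_of_gt hW), Real.log_exp]
  have hAstar : ∑ i, pstar i * (γ * t i / D) - ∑ i, pstar i * Real.log (pstar i / q i)
      = Real.log W := by
    have : ∑ i, pstar i * Real.log (pstar i / q i)
        = ∑ i, pstar i * (γ * t i / D) - (∑ i, pstar i) * Real.log W := by
      rw [Finset.sum_mul, ← Finset.sum_sub_distrib]
      exact Finset.sum_congr rfl fun i _ => by rw [hps_log i]; ring
    rw [this, hps_sum]; ring
  -- rewrite Z via A
  have hA : ∀ r : ι → ℝ,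
      γ * (Real.log D + (∑ i, t i * (r i - q i)) / D) - ∑ i, r i * Real.log (r i / q i)
      = γ * Real.log D - γ * (∑ i, t i * q i) / D
        + (∑ i, r i * (γ * t i / D) - ∑ i, r i * Real.log (r i / q i)) := by
    intro r
    have e1 : ∑ i, t i * (r i - q i) = ∑ i, t i * r i - ∑ i, t i * q i := by
      simp [mul_sub, Finset.sum_sub_distrib]
    have e2 : ∑ i, r i * (γ * t i / D) = γ * (∑ i, t i * r i) / D := by
      rw [Finset.mul_sum, Finset.sum_div]
      exact Finset.sum_congr rfl fun i _ => by ring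
    rw [e1, e2]
    field_simp
    ring
  rw [hZ p, hZ pstar, hA p, hA pstar]
  have h1 := key p hp hpsum
  linarith [hAstar.ge, hAstar.le, h1]
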